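/- Let n ≥ 4 and 0 < α ≤ log_{n−2}((n²−n−2)/(n²−n−4)). Then a simple graph G on n vertices maximizes σ_t^α among all simple graphs on n vertices if and only if G is antiregular. -/

import Mathlib

open Finset

/-- The degree of a vertex: the number of its neighbors. -/
noncomputable def deg {n : ℕ} (G : SimpleGraph (Fin n)) (v : Fin n) : ℕ :=
  Nat.card {u | G.Adj v u}

/-- `σ_t^α(G) = Σ_{{u,v}⊆V(G)} |d(u)−d(v)|^α`, summed over unordered pairs of
distinct vertices. -/
noncomputable def sigmaT {n : ℕ} (G : SimpleGraph (Fin n)) (α : ℝ) : ℝ :=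
  ∑ i : Fin n, ∑ j ∈ Finset.Ioi i, |((deg G i : ℝ)) - (deg G j : ℝ)| ^ α

/-- A graph on `n` vertices is antiregular if its vertices realize exactly
`n − 1` distinct degree values. -/
def IsAntiregular {n : ℕ} (G : SimpleGraph (Fin n)) : Prop :=
  (Finset.univ.image (deg G)).card = n - 1

noncomputable def degV {V : Type} [Fintype V] (G : SimpleGraph V) (v : V) : ℕ :=
  Nat.card {u | G.Adj v u}

variable {V : Type} [Fintype V] [DecidableEq V]

lemma degV_eq (G : SimpleGraph V) [DecidableRel G.Adj] (v : V) :
    degV G v = (univ.filter (fun u => G.Adj v u)).card := by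
  rw [degV, Nat.card_eq_fintype_card, Fintype.card_subtype]; rfl

lemma degV_le (G : SimpleGraph V) (v : V) : degV G v ≤ Fintype.card V - 1 := by
  classical
  rw [degV_eq]
  have h : (univ.filter (fun u => G.Adj v u)) ⊆ univ.erase v := by
    intro u hu
    simp only [mem_filter] at hu
    exact mem_erase.2 ⟨fun h => G.irrefl (h ▸ hu.2), mem_univ u⟩
  calc (univ.filter (fun u => G.Adj v u)).card ≤ (univ.erase v).card := card_le_card h
    _ = Fintype.card V - 1 := by rw [card_erase_of_mem (mem_univ v), card_univ]

lemma isolated_of_degV_zero (G : SimpleGraph V) {z : V} (h : degV G z = 0) :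
    ∀ u, ¬ G.Adj z u := by
  classical
  rw [degV_eq, card_eq_zero] at h
  intro u hu
  have : u ∈ (univ.filter (fun u => G.Adj z u)) := by simp [hu]
  simp [h] at this

lemma adj_of_degV_max (G : SimpleGraph V) {w : V} (h : degV G w = Fintype.card V - 1)
    (hn : 1 ≤ Fintype.card V) :
    ∀ u, u ≠ w → G.Adj w u := by
  classical
  rw [degV_eq] at h
  have hsub : (univ.filter (fun u => G.Adj w u)) ⊆ univ.erase w := by
    intro u hu
    simp only [mem_filter] at hu
    exact mem_erase.2 ⟨fun h => G.irrefl (h ▸ hu.2), mem_univ u⟩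
  have hcard : (univ.erase w).card ≤ (univ.filter (fun u => G.Adj w u)).card := by
    rw [h, card_erase_of_mem (mem_univ w), card_univ]
  have := Finset.eq_of_subset_of_card_le hsub hcard
  intro u hu
  have : u ∈ univ.filter (fun u => G.Adj w u) := by
    rw [this]; exact mem_erase.2 ⟨hu, mem_univ u⟩
  exact (mem_filter.1 this).2

noncomputable def degM {V : Type} [Fintype V] (G : SimpleGraph V) : Multiset ℕ :=
  Multiset.map (degV G) Finset.univ.val

lemma degM_card (G : SimpleGraph V) : Multiset.card (degM G) = Fintype.card V := by
  simp [degM, Finset.card_univ]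

lemma exists_of_mem_degM (G : SimpleGraph V) {a : ℕ} (h : a ∈ degM G) :
    ∃ v : V, degV G v = a := by
  obtain ⟨v, -, hv⟩ := Multiset.mem_map.1 h
  exact ⟨v, hv⟩

lemma degV_compl (G : SimpleGraph V) [DecidableRel G.Adj] (v : V) :
    degV Gᶜ v = Fintype.card V - 1 - degV G v := by
  classical
  rw [degV_eq, degV_eq]
  have : (univ.filter (fun u => Gᶜ.Adj v u)) = (univ.filter (fun u => ¬ G.Adj v u)).erase v := by
    ext u
    simp only [mem_filter, mem_erase, SimpleGraph.compl_adj, mem_univ, true_and]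
    tauto
  rw [this, card_erase_of_mem (by simp [G.irrefl]), filter_not, card_sdiff_of_subset (filter_subset _ _)]
  simp only [card_univ]
  have he : (filter (G.Adj v) univ) = filter (fun u => G.Adj v u) univ := rfl
  rw [he]
  omega

lemma degV_comap (G : SimpleGraph V) [DecidableRel G.Adj] {z w : V} (hz : ∀ u, ¬ G.Adj z u)
    (hw : ∀ u, u ≠ w → u ≠ z → G.Adj w u) (a : {u : V // u ≠ z ∧ u ≠ w}) :
    degV (SimpleGraph.comap (Subtype.val : {u : V // u ≠ z ∧ u ≠ w} → V) G) a
      = degV G a.val - 1 := by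
  classical
  have e : {b : {u : V // u ≠ z ∧ u ≠ w} | G.Adj a.val b.val}
      ≃ {u : V // (u ≠ z ∧ u ≠ w) ∧ G.Adj a.val u} :=
    { toFun := fun b => ⟨b.val.val, b.val.property, b.property⟩
      invFun := fun u => ⟨⟨u.val, u.property.1⟩, u.property.2⟩
      left_inv := fun b => rfl
      right_inv := fun u => rfl }
  have h1 : degV (SimpleGraph.comap (Subtype.val : {u : V // u ≠ z ∧ u ≠ w} → V) G) a
      = Nat.card {u : V // (u ≠ z ∧ u ≠ w) ∧ G.Adj a.val u} := Nat.card_congr e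
  rw [h1, Nat.card_eq_fintype_card, Fintype.card_subtype]
  have hset : (univ.filter (fun u => (u ≠ z ∧ u ≠ w) ∧ G.Adj a.val u))
      = (univ.filter (fun u => G.Adj a.val u)).erase w := by
    ext u
    simp only [mem_filter, mem_erase, mem_univ, true_and]
    constructor
    · rintro ⟨⟨-, huw⟩, hadj⟩; exact ⟨huw, hadj⟩
    · rintro ⟨huw, hadj⟩
      refine ⟨⟨?_, huw⟩, hadj⟩
      rintro rfl
      exact hz a.val (G.adj_symm hadj)
  rw [hset, card_erase_of_mem, degV_eq]
  exact mem_filter.2 ⟨mem_univ w, G.adj_symm (hw a.val a.property.2 a.property.1)⟩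

lemma subtype_univ_val_map (p : V → Prop) [DecidablePred p] :
    ((univ : Finset {u : V // p u}).val.map Subtype.val) = (univ.filter p).val := by
  have := Finset.subtype_map (s := (univ : Finset V)) p
  rw [Finset.subtype_univ] at this
  rw [← this, Finset.map_val]
  rfl

lemma univ_val_eq_cons {z w : V} (hzw : z ≠ w) :
    (univ : Finset V).val
      = z ::ₘ w ::ₘ (univ.filter (fun u => u ≠ z ∧ u ≠ w)).val := by
  classical
  have h1 : (univ.filter (fun u => u ≠ z ∧ u ≠ w)) = (univ.erase z).erase w := by
    ext u
    simp only [mem_filter, mem_erase, mem_univ, true_and]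
    tauto
  rw [h1]
  have hwz : w ∈ (univ : Finset V).erase z := mem_erase.2 ⟨hzw.symm, mem_univ w⟩
  rw [erase_val, erase_val, Multiset.cons_erase (by exact_mod_cast hwz),
    Multiset.cons_erase (mem_univ_val z)]

lemma degM_cons (G : SimpleGraph V) {z w : V} (hzw : z ≠ w) :
    degM G = degV G z ::ₘ degV G w ::ₘ
      Multiset.map (degV G) ((univ.filter (fun u => u ≠ z ∧ u ≠ w)).val) := by
  classical
  rw [degM, univ_val_eq_cons hzw, Multiset.map_cons, Multiset.map_cons]

lemma degM_comap (G : SimpleGraph V) [DecidableRel G.Adj] {z w : V} (hzw : z ≠ w)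
    (hz : ∀ u, ¬ G.Adj z u) (hw : ∀ u, u ≠ w → u ≠ z → G.Adj w u) :
    degM (SimpleGraph.comap (Subtype.val : {u : V // u ≠ z ∧ u ≠ w} → V) G)
      = Multiset.map (fun u => degV G u - 1)
          ((univ.filter (fun u => u ≠ z ∧ u ≠ w)).val) := by
  classical
  rw [degM]
  have h1 : Multiset.map (degV (SimpleGraph.comap (Subtype.val : {u : V // u ≠ z ∧ u ≠ w} → V) G))
        (univ : Finset {u : V // u ≠ z ∧ u ≠ w}).val
      = Multiset.map ((fun u => degV G u - 1) ∘ (Subtype.val : {u : V // u ≠ z ∧ u ≠ w} → V))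
        (univ : Finset {u : V // u ≠ z ∧ u ≠ w}).val := by
    apply Multiset.map_congr rfl
    intro a _
    exact degV_comap G hz hw a
  rw [h1, ← Multiset.map_map, subtype_univ_val_map]

lemma mrange_succ_eq (m : ℕ) :
    Multiset.range (m + 1) = 0 ::ₘ Multiset.map Nat.succ (Multiset.range m) := by
  have := congrArg ((↑·) : List ℕ → Multiset ℕ) (List.range_succ_eq_map (n := m))
  simp only [Multiset.range, List.map_eq_map] at this ⊢
  exact_mod_cast this

lemma mrange_erase_zero (m : ℕ) :
    (Multiset.range (m + 1)).erase 0 = Multiset.map Nat.succ (Multiset.range m) := by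
  rw [mrange_succ_eq, Multiset.erase_cons_head]

lemma degV_eq_degree (G : SimpleGraph V) [DecidableRel G.Adj] (v : V) :
    degV G v = G.degree v := by
  rw [degV_eq, SimpleGraph.degree, SimpleGraph.neighborFinset]
  congr 1
  ext u
  simp [SimpleGraph.mem_neighborSet]

lemma degM_sum_even (G : SimpleGraph V) : Even (degM G).sum := by
  classical
  haveI : DecidableRel G.Adj := Classical.decRel _
  have h : (degM G).sum = ∑ v : V, G.degree v := by
    rw [degM, Finset.sum]
    rw [Multiset.map_congr rfl (fun v _ => degV_eq_degree G v)]
  rw [h, SimpleGraph.sum_degrees_eq_twice_card_edges]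
  exact ⟨G.edgeFinset.card, by ring⟩

lemma exists_pair_of_count (f : V → ℕ) (a : ℕ)
    (h : 2 ≤ Multiset.count a (Multiset.map f univ.val)) :
    ∃ u v : V, u ≠ v ∧ f u = a ∧ f v = a := by
  classical
  have hc : Multiset.count a (Multiset.map f univ.val)
      = (univ.filter (fun u => f u = a)).card := by
    rw [Multiset.count_map]
    rw [show (univ.filter (fun u => f u = a)).card
        = Multiset.card ((univ.val).filter (fun u => f u = a)) from rfl]
    congr 1
    apply Multiset.filter_congr
    intro x _
    exact eq_comm
  rw [hc] at h
  obtain ⟨u, hu, v, hv, huv⟩ := Finset.one_lt_card.1 h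
  exact ⟨u, v, huv, (mem_filter.1 hu).2, (mem_filter.1 hv).2⟩

lemma degV_le_sub_two (G : SimpleGraph V) {z v : V} (hz : ∀ u, ¬ G.Adj z u)
    (hvz : v ≠ z) : degV G v ≤ Fintype.card V - 2 := by
  classical
  haveI : DecidableRel G.Adj := Classical.decRel _
  rw [degV_eq]
  have h : (univ.filter (fun u => G.Adj v u)) ⊆ (univ.erase v).erase z := by
    intro u hu
    simp only [mem_filter] at hu
    refine mem_erase.2 ⟨fun h => hz v (h ▸ G.adj_symm hu.2), mem_erase.2
      ⟨fun h => G.irrefl (h ▸ hu.2), mem_univ u⟩⟩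
  calc (univ.filter (fun u => G.Adj v u)).card ≤ ((univ.erase v).erase z).card :=
        card_le_card h
    _ = Fintype.card V - 2 := by
        rw [card_erase_of_mem (mem_erase.2 ⟨fun h => hvz h.symm, mem_univ z⟩),
          card_erase_of_mem (mem_univ v), card_univ]
        omega

lemma adj_of_deg_sub_two (G : SimpleGraph V) {z w : V} (hz : ∀ u, ¬ G.Adj z u)
    (hw : degV G w = Fintype.card V - 2) (hwz : w ≠ z) (hcard : 2 ≤ Fintype.card V) :
    ∀ u, u ≠ w → u ≠ z → G.Adj w u := by
  classical
  haveI : DecidableRel G.Adj := Classical.decRel _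
  rw [degV_eq] at hw
  have hsub : (univ.filter (fun u => G.Adj w u)) ⊆ (univ.erase w).erase z := by
    intro u hu
    simp only [mem_filter] at hu
    exact mem_erase.2 ⟨fun h => hz w (h ▸ G.adj_symm hu.2), mem_erase.2
      ⟨fun h => G.irrefl (h ▸ hu.2), mem_univ u⟩⟩
  have hcard2 : ((univ.erase w).erase z).card ≤ (univ.filter (fun u => G.Adj w u)).card := by
    rw [hw, card_erase_of_mem (mem_erase.2 ⟨fun h => hwz h.symm, mem_univ z⟩),
      card_erase_of_mem (mem_univ w), card_univ]
    omega
  have heq := Finset.eq_of_subset_of_card_le hsub hcard2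
  intro u huw huz
  have : u ∈ univ.filter (fun u => G.Adj w u) := by
    rw [heq]; exact mem_erase.2 ⟨huz, mem_erase.2 ⟨huw, mem_univ u⟩⟩
  exact (mem_filter.1 this).2

lemma repeat_deg : ∀ (k : ℕ) (V : Type) [Fintype V] [DecidableEq V] (G : SimpleGraph V)
    (r : ℕ), Fintype.card V = k → degM G = r ::ₘ Multiset.range (k - 1) → r = (k - 1) / 2 := by
  intro k
  induction k using Nat.strong_induction_on with
  | _ k ih =>
    intro V _ _ G r hcard hdeg
    haveI : DecidableRel G.Adj := Classical.decRel _
    have hcardM : Multiset.card (degM G) = k := by rw [degM_card, hcard]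
    match k, ih with
    | 0, _ => rw [hdeg] at hcardM; simp at hcardM
    | 1, _ =>
      have hr : r ∈ degM G := by rw [hdeg]; exact Multiset.mem_cons_self _ _
      obtain ⟨v, hv⟩ := exists_of_mem_degM G hr
      have h2 := degV_le G v
      rw [hcard] at h2
      omega
    | 2, _ =>
      have h0 : (0 : ℕ) ∈ degM G := by
        rw [hdeg]; exact Multiset.mem_cons_of_mem (by simp)
      obtain ⟨z, hz⟩ := exists_of_mem_degM G h0
      have hziso := isolated_of_degV_zero G hz
      have hr : r ∈ degM G := by rw [hdeg]; exact Multiset.mem_cons_self _ _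
      obtain ⟨v, hv⟩ := exists_of_mem_degM G hr
      by_cases hvz : v = z
      · rw [hvz, hz] at hv; omega
      · have h2 := degV_le_sub_two G hziso hvz
        rw [hcard] at h2
        omega
    | 3, _ =>
      have h0 : (0 : ℕ) ∈ degM G := by
        rw [hdeg]; exact Multiset.mem_cons_of_mem (by simp)
      obtain ⟨z, hz⟩ := exists_of_mem_degM G h0
      have hziso := isolated_of_degV_zero G hz
      have hr : r ∈ degM G := by rw [hdeg]; exact Multiset.mem_cons_self _ _
      obtain ⟨v, hv⟩ := exists_of_mem_degM G hr
      have heven := degM_sum_even G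
      rw [hdeg] at heven
      have hsum : (r ::ₘ Multiset.range 2).sum = r + 1 := by
        simp [Multiset.sum_cons]
      rw [hsum] at heven
      obtain ⟨t2, ht2⟩ := heven
      have hvz : v ≠ z := by intro h; rw [h, hz] at hv; omega
      have h2 := degV_le_sub_two G hziso hvz
      rw [hcard] at h2
      omega
    | (m+4), ih =>
      replace hdeg : degM G = r ::ₘ Multiset.range (m + 3) := by simpa using hdeg
      have h0 : (0 : ℕ) ∈ degM G := by
        rw [hdeg]
        exact Multiset.mem_cons_of_mem (by rw [Multiset.mem_range]; omega)
      obtain ⟨z, hz⟩ := exists_of_mem_degM G h0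
      have hziso := isolated_of_degV_zero G hz
      have hm2 : (m + 2 : ℕ) ∈ degM G := by
        rw [hdeg]
        exact Multiset.mem_cons_of_mem (by rw [Multiset.mem_range]; omega)
      obtain ⟨w, hwdeg⟩ := exists_of_mem_degM G hm2
      have hwz : w ≠ z := by intro h; rw [h, hz] at hwdeg; omega
      have hwadj : ∀ u, u ≠ w → u ≠ z → G.Adj w u :=
        adj_of_deg_sub_two G hziso (by rw [hwdeg, hcard]; omega) hwz (by omega)
      have hr0 : r ≠ 0 := by
        rintro rfl
        have hcount : 2 ≤ Multiset.count 0 (Multiset.map (degV G) univ.val) := by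
          have hc : Multiset.count 0 (degM G)
              = Multiset.count 0 ((0 : ℕ) ::ₘ Multiset.range (m + 3)) := by rw [← hdeg]
          rw [degM] at hc
          rw [hc, Multiset.count_cons_self]
          have : 0 < Multiset.count 0 (Multiset.range (m + 3)) :=
            Multiset.count_pos.2 (by rw [Multiset.mem_range]; omega)
          omega
        obtain ⟨u, v, huv, hu, hv⟩ := exists_pair_of_count (degV G) 0 hcount
        have hune : u ≠ z ∨ v ≠ z := by
          rcases eq_or_ne u z with rfl | h
          · right; exact fun h2 => huv (h2 ▸ rfl)
          · left; exact h
        rcases hune with h | h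
        · have huw : u ≠ w := by intro he; rw [he, hwdeg] at hu; omega
          exact isolated_of_degV_zero G hu w (G.adj_symm (hwadj u huw h))
        · have hvw : v ≠ w := by intro he; rw [he, hwdeg] at hv; omega
          exact isolated_of_degV_zero G hv w (G.adj_symm (hwadj v hvw h))
      have hrm2 : r ≠ m + 2 := by
        rintro rfl
        have hcount : 2 ≤ Multiset.count (m+2) (Multiset.map (degV G) univ.val) := by
          have hc : Multiset.count (m+2) (degM G)
              = Multiset.count (m+2) ((m+2) ::ₘ Multiset.range (m + 3)) := by rw [← hdeg]
          rw [degM] at hc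
          rw [hc, Multiset.count_cons_self]
          have : 0 < Multiset.count (m+2) (Multiset.range (m + 3)) :=
            Multiset.count_pos.2 (by rw [Multiset.mem_range]; omega)
          omega
        obtain ⟨w1, w2, hw12, hw1, hw2⟩ := exists_pair_of_count (degV G) (m+2) hcount
        have h1 : (1 : ℕ) ∈ degM G := by
          rw [hdeg]
          exact Multiset.mem_cons_of_mem (by rw [Multiset.mem_range]; omega)
        obtain ⟨a, ha⟩ := exists_of_mem_degM G h1
        have haz : a ≠ z := by intro h; rw [h, hz] at ha; omega
        have haw1 : a ≠ w1 := by intro h; rw [h, hw1] at ha; omega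
        have haw2 : a ≠ w2 := by intro h; rw [h, hw2] at ha; omega
        have hw1z : w1 ≠ z := by intro h; rw [h, hz] at hw1; omega
        have hw2z : w2 ≠ z := by intro h; rw [h, hz] at hw2; omega
        have hadj1 : G.Adj a w1 :=
          G.adj_symm (adj_of_deg_sub_two G hziso (by rw [hw1, hcard]; omega) hw1z (by omega) a haw1 haz)
        have hadj2 : G.Adj a w2 :=
          G.adj_symm (adj_of_deg_sub_two G hziso (by rw [hw2, hcard]; omega) hw2z (by omega) a haw2 haz)
        have hsub : ({w1, w2} : Finset V) ⊆ univ.filter (fun u => G.Adj a u) := by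
          intro x hx
          rcases Finset.mem_insert.1 hx with rfl | hx
          · exact mem_filter.2 ⟨mem_univ _, hadj1⟩
          · rw [Finset.mem_singleton.1 hx]; exact mem_filter.2 ⟨mem_univ _, hadj2⟩
        have hcard2 : 2 ≤ (univ.filter (fun u => G.Adj a u)).card := by
          calc 2 = ({w1, w2} : Finset V).card := (Finset.card_pair hw12).symm
            _ ≤ _ := card_le_card hsub
        rw [degV_eq] at ha
        omega
      have hrle : r ≤ m + 1 := by
        have hr : r ∈ degM G := by rw [hdeg]; exact Multiset.mem_cons_self _ _
        obtain ⟨v, hv⟩ := exists_of_mem_degM G hr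
        have hvz : v ≠ z := by intro h; rw [h, hz] at hv; omega
        have h2 := degV_le_sub_two G hziso hvz
        rw [hcard] at h2
        omega
      have hdegM2 : degM G = 0 ::ₘ (m+2) ::ₘ
          Multiset.map (degV G) ((univ.filter (fun u => u ≠ z ∧ u ≠ w)).val) := by
        rw [degM_cons G (Ne.symm hwz), hz, hwdeg]
      have hTeq : Multiset.map (degV G) ((univ.filter (fun u => u ≠ z ∧ u ≠ w)).val)
          = r ::ₘ Multiset.map Nat.succ (Multiset.range (m + 1)) := by
        have e1 : (0 : ℕ) ::ₘ (m+2) ::ₘ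
            Multiset.map (degV G) ((univ.filter (fun u => u ≠ z ∧ u ≠ w)).val)
            = r ::ₘ (m+2) ::ₘ Multiset.range (m+2) := by
          rw [← hdegM2, hdeg]
          congr 1
          exact Multiset.range_succ (m+2)
        have e2 : Multiset.map (degV G) ((univ.filter (fun u => u ≠ z ∧ u ≠ w)).val)
            = (((0 : ℕ) ::ₘ (m+2) ::ₘ
              Multiset.map (degV G) ((univ.filter (fun u => u ≠ z ∧ u ≠ w)).val)).erase 0).erase
              (m+2) := by
          rw [Multiset.erase_cons_head, Multiset.erase_cons_head]
        rw [e2, e1]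
        rw [Multiset.erase_cons_tail _ (show r ≠ (0:ℕ) by omega),
          Multiset.erase_cons_tail _ (show (m+2 : ℕ) ≠ 0 by omega)]
        rw [show Multiset.range (m+2) = Multiset.range (m+1+1) from rfl, mrange_erase_zero (m+1)]
        rw [Multiset.erase_cons_tail _ (show r ≠ (m+2:ℕ) by omega), Multiset.erase_cons_head]
      have hcard' : Fintype.card {u : V // u ≠ z ∧ u ≠ w} = m + 2 := by
        rw [Fintype.card_subtype]
        have h1 : (univ.filter (fun u => u ≠ z ∧ u ≠ w)) = (univ.erase z).erase w := by
          ext u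
          simp only [mem_filter, mem_erase, mem_univ, true_and, and_true]
          tauto
        rw [h1, card_erase_of_mem (mem_erase.2 ⟨hwz, mem_univ w⟩),
          card_erase_of_mem (mem_univ z), card_univ, hcard]
        omega
      have hdeg' : degM (SimpleGraph.comap (Subtype.val : {u : V // u ≠ z ∧ u ≠ w} → V) G)
          = (r - 1) ::ₘ Multiset.range (m + 1) := by
        rw [degM_comap G (Ne.symm hwz) hziso hwadj]
        have e3 : Multiset.map (fun u => degV G u - 1)
              ((univ.filter (fun u => u ≠ z ∧ u ≠ w)).val)
            = Multiset.map (fun x => x - 1)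
              (Multiset.map (degV G) ((univ.filter (fun u => u ≠ z ∧ u ≠ w)).val)) := by
          rw [Multiset.map_map]
          rfl
        rw [e3, hTeq, Multiset.map_cons, Multiset.map_map]
        congr 1
        have e4 : ((fun x => x - 1) ∘ Nat.succ) = id := funext fun x => rfl
        rw [e4, Multiset.map_id]
      have hfin := ih (m+2) (by omega) {u : V // u ≠ z ∧ u ≠ w}
        (SimpleGraph.comap (Subtype.val : {u : V // u ≠ z ∧ u ≠ w} → V) G) (r-1) hcard'
        (by simpa using hdeg')
      omega

lemma deg_eq_degV {n : ℕ} (G : SimpleGraph (Fin n)) : deg G = degV G := rfl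

section SigmaPart
variable {n : ℕ} (G : SimpleGraph (Fin n)) (α : ℝ)

noncomputable abbrev Qp (n : ℕ) : Finset ((_ : Fin n) × Fin n) :=
  Finset.univ.sigma (fun i => Ioi i)

lemma sigmaT_eq_sum_Q :
    sigmaT G α = ∑ p ∈ Qp n, |((deg G p.1 : ℝ)) - (deg G p.2 : ℝ)| ^ α := by
  rw [sigmaT, Finset.sum_sigma']

lemma card_Qp : (Qp n).card = n * (n-1) / 2 := by
  rw [Finset.card_sigma]
  have h1 : ∀ i : Fin n, (Ioi i).card = n - 1 - i.val := fun i => Fin.card_Ioi i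
  rw [Finset.sum_congr rfl (fun i _ => h1 i)]
  rw [Fin.sum_univ_eq_sum_range (fun j => n - 1 - j) n]
  rw [Finset.sum_range_reflect (fun j => j) n]
  have := Finset.sum_range_id_mul_two n
  omega

lemma deg_le (v : Fin n) : deg G v ≤ n - 1 := by
  have := degV_le G v
  simpa [deg_eq_degV, Fintype.card_fin] using this

lemma deg_diff_le_nat (hn : 2 ≤ n) (u v : Fin n) : deg G u ≤ deg G v + (n - 2) := by
  classical
  haveI : DecidableRel G.Adj := Classical.decRel _
  by_cases h : deg G u ≤ n - 2
  · omega
  · have hu : deg G u = n - 1 := by have := deg_le G u; omega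
    rcases eq_or_ne v u with rfl | hvu
    · omega
    · have hadj : G.Adj u v := by
        have := adj_of_degV_max (V := Fin n) G (by rw [← deg_eq_degV, hu, Fintype.card_fin])
          (by rw [Fintype.card_fin]; omega) v hvu
        exact this
      have h1 : 1 ≤ deg G v := by
        rw [deg_eq_degV, degV_eq]
        refine Finset.card_pos.2 ⟨u, ?_⟩
        exact mem_filter.2 ⟨mem_univ u, G.adj_symm hadj⟩
      omega

lemma deg_diff_le (hn : 2 ≤ n) (u v : Fin n) :
    |((deg G u : ℝ)) - (deg G v : ℝ)| ≤ (n : ℝ) - 2 := by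
  have h1 := deg_diff_le_nat G hn u v
  have h2 := deg_diff_le_nat G hn v u
  rw [abs_sub_le_iff]
  have hc : ((n - 2 : ℕ) : ℝ) = (n : ℝ) - 2 := by
    have : (2 : ℕ) ≤ n := hn
    push_cast [Nat.cast_sub this]
    ring
  constructor
  · have := (Nat.cast_le (α := ℝ)).2 h1
    push_cast at this
    rw [hc] at this
    linarith
  · have := (Nat.cast_le (α := ℝ)).2 h2
    push_cast at this
    rw [hc] at this
    linarith

variable {G α}

lemma term_nonneg (p : (_ : Fin n) × Fin n) :
    0 ≤ |((deg G p.1 : ℝ)) - (deg G p.2 : ℝ)| ^ α := Real.rpow_nonneg (abs_nonneg _) α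

lemma term_le (hn : 2 ≤ n) (hα0 : 0 < α) (p : (_ : Fin n) × Fin n) :
    |((deg G p.1 : ℝ)) - (deg G p.2 : ℝ)| ^ α ≤ ((n : ℝ) - 2) ^ α :=
  Real.rpow_le_rpow (abs_nonneg _) (deg_diff_le G hn p.1 p.2) hα0.le

lemma term_eq_zero (hα0 : 0 < α) {p : (_ : Fin n) × Fin n} (h : deg G p.1 = deg G p.2) :
    |((deg G p.1 : ℝ)) - (deg G p.2 : ℝ)| ^ α = 0 := by
  rw [h]
  simp [Real.zero_rpow hα0.ne']

lemma one_le_term (hα0 : 0 < α) {p : (_ : Fin n) × Fin n} (h : deg G p.1 ≠ deg G p.2) :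
    1 ≤ |((deg G p.1 : ℝ)) - (deg G p.2 : ℝ)| ^ α := by
  apply Real.one_le_rpow _ hα0.le
  have h1 : ((deg G p.1 : ℝ)) - (deg G p.2 : ℝ) = ((deg G p.1 : ℤ) - (deg G p.2 : ℤ) : ℤ) := by
    push_cast; ring
  rw [h1, ← Int.cast_abs]
  have h2 : 1 ≤ |(deg G p.1 : ℤ) - (deg G p.2 : ℤ)| := by
    have hne : (deg G p.1 : ℤ) - (deg G p.2 : ℤ) ≠ 0 := by
      intro he
      exact h (by omega)
    exact Int.one_le_abs hne
  exact_mod_cast h2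

lemma two_le_term (hα0 : 0 < α) {p : (_ : Fin n) × Fin n}
    (h : 2 ≤ |((deg G p.1 : ℝ)) - (deg G p.2 : ℝ)|) :
    (2 : ℝ) ^ α ≤ |((deg G p.1 : ℝ)) - (deg G p.2 : ℝ)| ^ α :=
  Real.rpow_le_rpow (by norm_num) h hα0.le

end SigmaPart

noncomputable def pairSumF (α : ℝ) (D : Multiset ℕ) : ℝ :=
  (D.map (fun (a : ℕ) => (D.map (fun (b : ℕ) => |((a : ℕ) : ℝ) - ((b : ℕ) : ℝ)| ^ α)).sum)).sum

section DoubleSum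
variable {n : ℕ} {G : SimpleGraph (Fin n)} {α : ℝ}

lemma degM_fin (G : SimpleGraph (Fin n)) :
    degM G = Multiset.map (deg G) Finset.univ.val := rfl

lemma msum_eq (h : ℕ → ℝ) (G : SimpleGraph (Fin n)) :
    (Multiset.map h (degM G)).sum = ∑ i : Fin n, h (deg G i) := by
  rw [degM_fin, Multiset.map_map]
  rfl

lemma pairSumF_degM (G : SimpleGraph (Fin n)) (α : ℝ) :
    pairSumF α (degM G)
      = ∑ i : Fin n, ∑ j : Fin n, |((deg G i : ℝ)) - (deg G j : ℝ)| ^ α := by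
  rw [pairSumF, msum_eq]
  apply Finset.sum_congr rfl
  intro i _
  rw [msum_eq]

lemma two_mul_sigmaT (hα0 : 0 < α) (G : SimpleGraph (Fin n)) :
    2 * sigmaT G α = ∑ i : Fin n, ∑ j : Fin n, |((deg G i : ℝ)) - (deg G j : ℝ)| ^ α := by
  classical
  set t : Fin n → Fin n → ℝ := fun i j => |((deg G i : ℝ)) - (deg G j : ℝ)| ^ α with ht
  have tsymm : ∀ i j, t i j = t j i := by
    intro i j; rw [ht]; simp only; rw [abs_sub_comm]
  have tdiag : ∀ i, t i i = 0 := by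
    intro i; rw [ht]; simp [Real.zero_rpow hα0.ne']
  have hsplit : ∀ i j : Fin n,
      t i j = (if i < j then t i j else 0) + (if j < i then t i j else 0) := by
    intro i j
    rcases lt_trichotomy i j with h | h | h
    · rw [if_pos h, if_neg (asymm h)]; ring
    · rw [if_neg (h ▸ lt_irrefl i), if_neg (h ▸ lt_irrefl i), h, tdiag]; ring
    · rw [if_neg (asymm h), if_pos h]; ring
  have h1 : ∑ i : Fin n, ∑ j : Fin n, t i j
      = (∑ i : Fin n, ∑ j : Fin n, if i < j then t i j else 0)
        + (∑ i : Fin n, ∑ j : Fin n, if j < i then t i j else 0) := by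
    rw [← Finset.sum_add_distrib]
    apply Finset.sum_congr rfl
    intro i _
    rw [← Finset.sum_add_distrib]
    exact Finset.sum_congr rfl fun j _ => hsplit i j
  have hIoi : ∀ (s : Fin n → Fin n → ℝ),
      (∑ i : Fin n, ∑ j : Fin n, if i < j then s i j else 0)
        = ∑ i : Fin n, ∑ j ∈ Ioi i, s i j := by
    intro s
    apply Finset.sum_congr rfl
    intro i _
    rw [← Finset.sum_filter]
    congr 1
    ext j
    simp
  have h2 : (∑ i : Fin n, ∑ j : Fin n, if j < i then t i j else 0)
      = ∑ i : Fin n, ∑ j ∈ Ioi i, t i j := by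
    rw [Finset.sum_comm]
    rw [hIoi (fun j i => t i j)]
    apply Finset.sum_congr rfl
    intro i _
    exact Finset.sum_congr rfl fun j _ => tsymm j i
  rw [h1, hIoi t, h2, sigmaT]
  ring

lemma mk_pair {i j : Fin n} (hij : i ≠ j) :
    ∃ p : (_ : Fin n) × Fin n, p ∈ Qp n ∧
      ((p.1 = i ∧ p.2 = j) ∨ (p.1 = j ∧ p.2 = i)) := by
  rcases lt_or_gt_of_ne hij with h | h
  · exact ⟨⟨i, j⟩, Finset.mem_sigma.2 ⟨mem_univ i, Finset.mem_Ioi.2 h⟩, Or.inl ⟨rfl, rfl⟩⟩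
  · exact ⟨⟨j, i⟩, Finset.mem_sigma.2 ⟨mem_univ j, Finset.mem_Ioi.2 h⟩, Or.inr ⟨rfl, rfl⟩⟩

lemma exists_collision (h : (univ.image (deg G)).card < n) :
    ∃ p ∈ Qp n, deg G p.1 = deg G p.2 := by
  classical
  obtain ⟨x, -, y, -, hxy, hfxy⟩ := Finset.exists_ne_map_eq_of_card_lt_of_maps_to
    (by rw [Finset.card_univ, Fintype.card_fin]; exact h)
    (fun a _ => Finset.mem_image_of_mem (deg G) (mem_univ a))
  obtain ⟨p, hp, hcase⟩ := mk_pair hxy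
  refine ⟨p, hp, ?_⟩
  rcases hcase with ⟨h1, h2⟩ | ⟨h1, h2⟩ <;> rw [h1, h2]
  · exact hfxy
  · exact hfxy.symm

lemma exists_two_collisions (hn : 2 ≤ n) (h : (univ.image (deg G)).card ≤ n - 2) :
    ∃ p ∈ Qp n, ∃ q ∈ Qp n, p ≠ q ∧ deg G p.1 = deg G p.2 ∧ deg G q.1 = deg G q.2 := by
  classical
  obtain ⟨x, -, y, -, hxy, hfxy⟩ := Finset.exists_ne_map_eq_of_card_lt_of_maps_to
    (s := (univ : Finset (Fin n)))
    (by rw [Finset.card_univ, Fintype.card_fin]; omega)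
    (fun a _ => Finset.mem_image_of_mem (deg G) (mem_univ a))
  obtain ⟨k, hk, l, hl, hkl, hfkl⟩ := Finset.exists_ne_map_eq_of_card_lt_of_maps_to
    (s := (univ : Finset (Fin n)).erase x)
    (t := ((univ : Finset (Fin n)).erase x).image (deg G))
    (by
      calc (((univ : Finset (Fin n)).erase x).image (deg G)).card
          ≤ ((univ : Finset (Fin n)).image (deg G)).card :=
            Finset.card_le_card (Finset.image_subset_image (Finset.erase_subset _ _))
        _ < ((univ : Finset (Fin n)).erase x).card := by
            rw [Finset.card_erase_of_mem (mem_univ x), Finset.card_univ, Fintype.card_fin]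
            omega)
    (fun a ha => Finset.mem_image_of_mem (deg G) ha)
  have hkx : k ≠ x := (Finset.mem_erase.1 hk).1
  have hlx : l ≠ x := (Finset.mem_erase.1 hl).1
  obtain ⟨p, hp, hcasep⟩ := mk_pair hxy
  obtain ⟨q, hq, hcaseq⟩ := mk_pair hkl
  refine ⟨p, hp, q, hq, ?_, ?_, ?_⟩
  · intro hpq
    have hx1 : p.1 = x ∨ p.2 = x := by
      rcases hcasep with ⟨h1, h2⟩ | ⟨h1, h2⟩
      · left; exact h1
      · right; exact h2
    have hq1 : q.1 ≠ x ∧ q.2 ≠ x := by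
      rcases hcaseq with ⟨h1, h2⟩ | ⟨h1, h2⟩
      · exact ⟨h1 ▸ hkx, h2 ▸ hlx⟩
      · exact ⟨h1 ▸ hlx, h2 ▸ hkx⟩
    rw [hpq] at hx1
    rcases hx1 with h | h
    · exact hq1.1 h
    · exact hq1.2 h
  · rcases hcasep with ⟨h1, h2⟩ | ⟨h1, h2⟩ <;> rw [h1, h2]
    · exact hfxy
    · exact hfxy.symm
  · rcases hcaseq with ⟨h1, h2⟩ | ⟨h1, h2⟩ <;> rw [h1, h2]
    · exact hfkl
    · exact hfkl.symm

lemma image_card_le_of_two_pairs (f : Fin n → ℕ) {a b c d : Fin n}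
    (hab : a < b) (hcd : c < d) (hne : ¬(a = c ∧ b = d))
    (h1 : f a = f b) (h2 : f c = f d) :
    (univ.image f).card ≤ n - 2 := by
  classical
  have key : ∃ u v : Fin n, u ≠ v ∧
      (univ.image f) ⊆ (((univ : Finset (Fin n)).erase u).erase v).image f := by
    have mem2 : ∀ {x u v : Fin n}, x ≠ u → x ≠ v →
        x ∈ ((univ : Finset (Fin n)).erase v).erase u := fun hxu hxv =>
      Finset.mem_erase.2 ⟨hxu, Finset.mem_erase.2 ⟨hxv, mem_univ _⟩⟩
    by_cases hbd : b = d
    · have hac : a ≠ c := fun h => hne ⟨h, hbd⟩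
      refine ⟨a, c, hac, ?_⟩
      intro y hy
      obtain ⟨x, -, hx⟩ := Finset.mem_image.1 hy
      have hbmem : b ∈ ((univ : Finset (Fin n)).erase a).erase c :=
        mem2 (by rw [hbd]; exact hcd.ne') hab.ne'
      rcases eq_or_ne x a with hxa | hxa
      · exact Finset.mem_image.2 ⟨b, hbmem, by rw [← h1, ← hxa]; exact hx⟩
      rcases eq_or_ne x c with hxc | hxc
      · refine Finset.mem_image.2 ⟨b, hbmem, ?_⟩
        rw [hbd, ← h2, ← hxc]; exact hx
      · exact Finset.mem_image.2 ⟨x, mem2 hxc hxa, hx⟩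
    · refine ⟨b, d, hbd, ?_⟩
      intro y hy
      obtain ⟨x, -, hx⟩ := Finset.mem_image.1 hy
      rcases eq_or_ne x b with hxb | hxb
      · rcases eq_or_ne a d with had | had
        · have hcb : c ≠ b := by
            intro h
            rw [← had] at hcd
            rw [h] at hcd
            exact absurd (hcd.trans hab) (lt_irrefl b)
          refine Finset.mem_image.2 ⟨c, mem2 hcd.ne hcb, ?_⟩
          rw [h2, ← had, h1, ← hxb]; exact hx
        · refine Finset.mem_image.2 ⟨a, mem2 had hab.ne, ?_⟩
          rw [h1, ← hxb]; exact hx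
      rcases eq_or_ne x d with hxd | hxd
      · rcases eq_or_ne c b with hcb | hcb
        · have had : a ≠ d := by
            intro h
            rw [← hcb] at hab
            rw [h] at hab
            exact absurd (hab.trans hcd) (lt_irrefl d)
          refine Finset.mem_image.2 ⟨a, mem2 had hab.ne, ?_⟩
          rw [h1, ← hcb, h2, ← hxd]; exact hx
        · refine Finset.mem_image.2 ⟨c, mem2 hcd.ne hcb, ?_⟩
          rw [h2, ← hxd]; exact hx
      · exact Finset.mem_image.2 ⟨x, mem2 hxd hxb, hx⟩
  obtain ⟨u, v, huv, hsub⟩ := key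
  calc (univ.image f).card ≤ ((((univ : Finset (Fin n)).erase u).erase v).image f).card :=
        Finset.card_le_card hsub
    _ ≤ (((univ : Finset (Fin n)).erase u).erase v).card := Finset.card_image_le
    _ = n - 2 := by
        rw [Finset.card_erase_of_mem (Finset.mem_erase.2 ⟨huv.symm, mem_univ v⟩),
          Finset.card_erase_of_mem (mem_univ u), Finset.card_univ, Fintype.card_fin]
        omega

lemma collision_unique (hG : IsAntiregular G) (hn : 2 ≤ n)
    {p q : (_ : Fin n) × Fin n} (hp : p ∈ Qp n) (hq : q ∈ Qp n)
    (hpd : deg G p.1 = deg G p.2) (hqd : deg G q.1 = deg G q.2) : p = q := by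
  by_contra hpq
  have hp2 := Finset.mem_Ioi.1 (Finset.mem_sigma.1 hp).2
  have hq2 := Finset.mem_Ioi.1 (Finset.mem_sigma.1 hq).2
  have h := image_card_le_of_two_pairs (deg G) hp2 hq2
    (fun ⟨h1, h2⟩ => hpq (Sigma.ext h1 (heq_of_eq h2))) hpd hqd
  rw [IsAntiregular] at hG
  omega

lemma exists_gap_pair (hn : 4 ≤ n) (hG : IsAntiregular G) :
    ∃ p ∈ Qp n, 2 ≤ |((deg G p.1 : ℝ)) - (deg G p.2 : ℝ)| := by
  classical
  set I := univ.image (deg G) with hI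
  have hIcard : I.card = n - 1 := hG
  have hne : I.Nonempty := Finset.card_pos.1 (by omega)
  set amin := I.min' hne
  set amax := I.max' hne
  have hgap : amin + 2 ≤ amax := by
    by_contra h
    have hsub : I ⊆ Finset.Icc amin (amin + 1) := by
      intro x hx
      rw [Finset.mem_Icc]
      have h1 := I.min'_le x hx
      have h2 := I.le_max' x hx
      omega
    have := Finset.card_le_card hsub
    rw [Nat.card_Icc] at this
    omega
  obtain ⟨u, -, hu⟩ := Finset.mem_image.1 (I.min'_mem hne)
  obtain ⟨v, -, hv⟩ := Finset.mem_image.1 (I.max'_mem hne)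
  have huv : u ≠ v := by intro h; rw [h, hv] at hu; omega
  obtain ⟨p, hp, hcase⟩ := mk_pair huv
  refine ⟨p, hp, ?_⟩
  have habs : ∀ x y : Fin n, deg G x + 2 ≤ deg G y →
      2 ≤ |((deg G x : ℝ)) - (deg G y : ℝ)| := by
    intro x y hxy
    have h1 : (deg G x : ℝ) + 2 ≤ (deg G y : ℝ) := by exact_mod_cast hxy
    rw [abs_sub_comm, abs_of_nonneg (by linarith)]
    linarith
  rcases hcase with ⟨h1, h2⟩ | ⟨h1, h2⟩
  · rw [h1, h2, hu, hv]
    have := habs u v (by rw [hu, hv]; omega)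
    rw [hu, hv] at this
    exact this
  · rw [h1, h2, hu, hv]
    have := habs u v (by rw [hu, hv]; omega)
    rw [hu, hv, abs_sub_comm] at this
    exact this

lemma sigmaT_le_nonanti (hn : 4 ≤ n) (hα0 : 0 < α) (hG : ¬ IsAntiregular G) :
    sigmaT G α ≤ ((n * (n-1) / 2 - 2 : ℕ) : ℝ) * ((n : ℝ) - 2) ^ α := by
  classical
  have himg : (univ.image (deg G)).card ≤ n - 2 := by
    have hle : (univ.image (deg G)).card ≤ n := by
      calc (univ.image (deg G)).card ≤ (univ : Finset (Fin n)).card := Finset.card_image_le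
        _ = n := by rw [Finset.card_univ, Fintype.card_fin]
    -- image card ≠ n : else deg injective and both 0, n-1 attained
    have hne_n : (univ.image (deg G)).card ≠ n := by
      intro h
      -- deg is injective, image has n values in [0, n-1], so 0 and n-1 both attained
      have hinj : Set.InjOn (deg G) (univ : Finset (Fin n)) := by
        apply Finset.injOn_of_card_image_eq
        rw [h, Finset.card_univ, Fintype.card_fin]
      have hsub : univ.image (deg G) ⊆ Finset.Icc 0 (n-1) := by
        intro x hx
        obtain ⟨u, -, hu⟩ := Finset.mem_image.1 hx
        rw [Finset.mem_Icc]
        exact ⟨Nat.zero_le x, hu ▸ deg_le G u⟩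
      have heq : univ.image (deg G) = Finset.Icc 0 (n-1) := by
        apply Finset.eq_of_subset_of_card_le hsub
        rw [Nat.card_Icc, h]
        omega
      have h0 : (0 : ℕ) ∈ univ.image (deg G) := by
        rw [heq]; rw [Finset.mem_Icc]; omega
      have hmax : (n - 1 : ℕ) ∈ univ.image (deg G) := by
        rw [heq]; rw [Finset.mem_Icc]; omega
      obtain ⟨z, -, hz⟩ := Finset.mem_image.1 h0
      obtain ⟨w, -, hw⟩ := Finset.mem_image.1 hmax
      have hzw : z ≠ w := by intro he; rw [he, hw] at hz; omega
      haveI : DecidableRel G.Adj := Classical.decRel _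
      have hadj : G.Adj w z := adj_of_degV_max (V := Fin n) G
        (by rw [← deg_eq_degV, hw, Fintype.card_fin])
        (by rw [Fintype.card_fin]; omega) z hzw
      exact isolated_of_degV_zero G hz w (G.adj_symm hadj)
    rw [IsAntiregular] at hG
    omega
  obtain ⟨p, hp, q, hq, hpq, hpd, hqd⟩ := exists_two_collisions (by omega) himg
  rw [sigmaT_eq_sum_Q]
  have hq' : q ∈ (Qp n).erase p := Finset.mem_erase.2 ⟨fun h => hpq (h.symm), hq⟩
  rw [← Finset.sum_erase_add _ _ hp, ← Finset.sum_erase_add _ _ hq']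
  rw [term_eq_zero hα0 hpd, term_eq_zero hα0 hqd]
  have hcard : (((Qp n).erase p).erase q).card = n * (n-1) / 2 - 2 := by
    rw [Finset.card_erase_of_mem hq', Finset.card_erase_of_mem hp, card_Qp]
    omega
  have hbound : ∑ x ∈ ((Qp n).erase p).erase q, |((deg G x.1 : ℝ)) - (deg G x.2 : ℝ)| ^ α
      ≤ ((n * (n-1) / 2 - 2 : ℕ) : ℝ) * ((n : ℝ) - 2) ^ α := by
    calc ∑ x ∈ ((Qp n).erase p).erase q, |((deg G x.1 : ℝ)) - (deg G x.2 : ℝ)| ^ α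
        ≤ ∑ _x ∈ ((Qp n).erase p).erase q, ((n : ℝ) - 2) ^ α :=
          Finset.sum_le_sum (fun x _ => term_le (by omega) hα0 x)
      _ = ((n * (n-1) / 2 - 2 : ℕ) : ℝ) * ((n : ℝ) - 2) ^ α := by
          rw [Finset.sum_const, hcard, nsmul_eq_mul]
  linarith

lemma sigmaT_ge_anti (hn : 4 ≤ n) (hα0 : 0 < α) (hG : IsAntiregular G) :
    ((n * (n-1) / 2 - 2 : ℕ) : ℝ) + 2 ^ α ≤ sigmaT G α := by
  classical
  have himg : (univ.image (deg G)).card < n := by rw [IsAntiregular] at hG; omega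
  obtain ⟨p0, hp0, hp0d⟩ := exists_collision himg
  obtain ⟨pg, hpg, hpgd⟩ := exists_gap_pair hn hG
  have hgne : deg G pg.1 ≠ deg G pg.2 := by
    intro h
    rw [h] at hpgd
    simp at hpgd
    linarith
  have hpgne : pg ≠ p0 := fun h => hgne (h ▸ hp0d)
  rw [sigmaT_eq_sum_Q]
  have hpg' : pg ∈ (Qp n).erase p0 := Finset.mem_erase.2 ⟨hpgne, hpg⟩
  rw [← Finset.sum_erase_add _ _ hp0, ← Finset.sum_erase_add _ _ hpg']
  rw [term_eq_zero hα0 hp0d, add_zero]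
  have hcard : (((Qp n).erase p0).erase pg).card = n * (n-1) / 2 - 2 := by
    rw [Finset.card_erase_of_mem hpg', Finset.card_erase_of_mem hp0, card_Qp]
    omega
  have hbound : ((n * (n-1) / 2 - 2 : ℕ) : ℝ)
      ≤ ∑ x ∈ ((Qp n).erase p0).erase pg, |((deg G x.1 : ℝ)) - (deg G x.2 : ℝ)| ^ α := by
    have h1 : ∀ x ∈ ((Qp n).erase p0).erase pg,
        (1 : ℝ) ≤ |((deg G x.1 : ℝ)) - (deg G x.2 : ℝ)| ^ α := by
      intro x hx
      have hxQ : x ∈ Qp n := Finset.mem_of_mem_erase (Finset.mem_of_mem_erase hx)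
      have hxne : x ≠ p0 := (Finset.mem_erase.1 (Finset.mem_of_mem_erase hx)).1
      apply one_le_term hα0
      intro hd
      exact hxne (collision_unique hG (by omega) hxQ hp0 hd hp0d)
    calc ((n * (n-1) / 2 - 2 : ℕ) : ℝ)
        = ∑ _x ∈ ((Qp n).erase p0).erase pg, (1:ℝ) := by
          rw [Finset.sum_const, hcard, nsmul_eq_mul, mul_one]
      _ ≤ _ := Finset.sum_le_sum h1
  have h2 := two_le_term (G := G) hα0 hpgd
  linarith

end DoubleSum

section Arith
variable {n : ℕ} {α : ℝ}

lemma N_ge (hn : 4 ≤ n) : 6 ≤ n * (n-1) / 2 := by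
  have h12 : 12 ≤ n * (n-1) := by
    calc 12 = 4 * 3 := rfl
      _ ≤ n * (n-1) := Nat.mul_le_mul hn (by omega)
  omega

lemma two_N (hn : 4 ≤ n) : ((n * (n-1) / 2 : ℕ) : ℝ) * 2 = (n:ℝ)^2 - n := by
  have heven : 2 ∣ n * (n - 1) := by
    rcases Nat.even_or_odd n with he | ho
    · exact Dvd.dvd.mul_right (even_iff_two_dvd.1 he) _
    · refine Dvd.dvd.mul_left ?_ _
      have : Even (n - 1) := by
        rcases ho with ⟨t, ht⟩
        exact ⟨t, by omega⟩
      exact even_iff_two_dvd.1 this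
  have h1 : n * (n-1) / 2 * 2 = n * (n-1) := Nat.div_mul_cancel heven
  have h2 : ((n * (n-1) / 2 * 2 : ℕ) : ℝ) = ((n * (n-1) : ℕ) : ℝ) := by rw [h1]
  push_cast at h2
  have hc : ((n - 1 : ℕ) : ℝ) = (n:ℝ) - 1 := by
    have : (1:ℕ) ≤ n := by omega
    push_cast [Nat.cast_sub this]
    ring
  rw [hc] at h2
  nlinarith [h2]

lemma key_ineq (hn : 4 ≤ n) (hα0 : 0 < α)
    (hα1 : α ≤ Real.logb ((n : ℝ) - 2) (((n : ℝ) ^ 2 - n - 2) / ((n : ℝ) ^ 2 - n - 4))) :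
    ((n * (n-1) / 2 - 2 : ℕ) : ℝ) * ((n : ℝ) - 2) ^ α ≤ ((n * (n-1) / 2 : ℕ) : ℝ) - 1 := by
  have hN6 := N_ge hn
  have h2N := two_N hn
  have hNr : (6 : ℝ) ≤ ((n * (n-1) / 2 : ℕ) : ℝ) := by exact_mod_cast hN6
  have hcast : ((n * (n-1) / 2 - 2 : ℕ) : ℝ) = ((n * (n-1) / 2 : ℕ) : ℝ) - 2 := by
    have : (2:ℕ) ≤ n * (n-1) / 2 := by omega
    push_cast [Nat.cast_sub this]
    ring
  have hn4 : (4 : ℝ) ≤ (n : ℝ) := by exact_mod_cast hn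
  have hb : (1 : ℝ) < (n : ℝ) - 2 := by linarith
  have hden : (0 : ℝ) < (n:ℝ)^2 - n - 4 := by nlinarith
  have hnum : (0 : ℝ) < (n:ℝ)^2 - n - 2 := by nlinarith
  have hratio : (0 : ℝ) < ((n : ℝ) ^ 2 - n - 2) / ((n : ℝ) ^ 2 - n - 4) :=
    div_pos hnum hden
  have hpow : ((n : ℝ) - 2) ^ α ≤ ((n : ℝ) ^ 2 - n - 2) / ((n : ℝ) ^ 2 - n - 4) := by
    calc ((n : ℝ) - 2) ^ α
        ≤ ((n : ℝ) - 2) ^ (Real.logb ((n : ℝ) - 2)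
            (((n : ℝ) ^ 2 - n - 2) / ((n : ℝ) ^ 2 - n - 4))) :=
          (Real.rpow_le_rpow_left_iff hb).2 hα1
      _ = ((n : ℝ) ^ 2 - n - 2) / ((n : ℝ) ^ 2 - n - 4) :=
          Real.rpow_logb (by linarith) (by intro h; linarith) hratio
  rw [hcast]
  set N := ((n * (n-1) / 2 : ℕ) : ℝ)
  have hNnum : (n:ℝ)^2 - n - 2 = 2*N - 2 := by linarith
  have hNden : (n:ℝ)^2 - n - 4 = 2*N - 4 := by linarith
  rw [hNnum, hNden] at hpow
  have hpow2 : (N - 2) * ((n : ℝ) - 2) ^ α ≤ (N - 2) * ((2*N - 2) / (2*N - 4)) :=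
    mul_le_mul_of_nonneg_left hpow (by linarith)
  have heq : (N - 2) * ((2*N - 2) / (2*N - 4)) = N - 1 := by
    have h0 : 2*N - 4 ≠ 0 := by linarith
    rw [mul_div_assoc', div_eq_iff h0]
    ring
  linarith [hpow2, heq ▸ hpow2]

lemma anti_gt (hn : 4 ≤ n) (hα0 : 0 < α) :
    ((n * (n-1) / 2 : ℕ) : ℝ) - 1 < ((n * (n-1) / 2 - 2 : ℕ) : ℝ) + 2 ^ α := by
  have hN6 := N_ge hn
  have hcast : ((n * (n-1) / 2 - 2 : ℕ) : ℝ) = ((n * (n-1) / 2 : ℕ) : ℝ) - 2 := by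
    have : (2:ℕ) ≤ n * (n-1) / 2 := by omega
    push_cast [Nat.cast_sub this]
    ring
  have h2 : (1:ℝ) < 2 ^ α :=
    Real.one_lt_rpow_iff_of_pos (by norm_num) |>.2 (Or.inl ⟨by norm_num, hα0⟩)
  rw [hcast]
  linarith

end Arith

section MultisetLemmas

lemma icc0_val (m : ℕ) : (Finset.Icc 0 m).val = Multiset.range (m+1) := by
  rw [Nat.Icc_eq_range']
  show ((List.range' 0 (m + 1 - 0) : List ℕ) : Multiset ℕ) = _
  rw [Nat.sub_zero, ← List.range_eq_range']
  rfl

lemma icc1_val (m : ℕ) : (Finset.Icc 1 m).val = Multiset.map Nat.succ (Multiset.range m) := by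
  rw [Nat.Icc_eq_range']
  show ((List.range' 1 (m + 1 - 1) : List ℕ) : Multiset ℕ) = _
  have h1 : m + 1 - 1 = m := by omega
  rw [h1, List.range'_eq_map_range (s := 1) (n := m)]
  have : ((List.map (fun x => 1 + x) (List.range m) : List ℕ) : Multiset ℕ)
      = Multiset.map (fun x => 1 + x) ((List.range m : List ℕ) : Multiset ℕ) := by
    simp
  rw [this]
  apply Multiset.map_congr rfl
  intro x _
  omega

lemma mrange_rev (m : ℕ) :
    Multiset.map (fun x => m - 1 - x) (Multiset.range m) = Multiset.range m := by
  induction m with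
  | zero => simp
  | succ k ih =>
    rw [Multiset.range_succ, Multiset.map_cons]
    simp only [Nat.add_sub_cancel, Nat.sub_self]
    have hcong2 : Multiset.map (fun x => k - x) (Multiset.range k)
        = Multiset.map (Nat.succ ∘ (fun x => k - 1 - x)) (Multiset.range k) := by
      apply Multiset.map_congr rfl
      intro x hx
      rw [Multiset.mem_range] at hx
      simp only [Function.comp_apply]
      omega
    rw [hcong2, ← Multiset.map_map, ih, ← mrange_succ_eq, ← Multiset.range_succ]

lemma map_reflect_range (m : ℕ) :
    Multiset.map (fun x => m - x) (Multiset.map Nat.succ (Multiset.range m))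
      = Multiset.range m := by
  rw [Multiset.map_map]
  have : Multiset.map ((fun x => m - x) ∘ Nat.succ) (Multiset.range m)
      = Multiset.map (fun x => m - 1 - x) (Multiset.range m) := by
    apply Multiset.map_congr rfl
    intro x hx
    rw [Multiset.mem_range] at hx
    simp only [Function.comp_apply]
    omega
  rw [this, mrange_rev]

lemma map_reflect_range' (m : ℕ) :
    Multiset.map (fun x => m - x) (Multiset.range m)
      = Multiset.map Nat.succ (Multiset.range m) := by
  have h1 : Multiset.map (fun x => m - x) (Multiset.range m)
      = Multiset.map (Nat.succ ∘ (fun x => m - 1 - x)) (Multiset.range m) := by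
    apply Multiset.map_congr rfl
    intro x hx
    rw [Multiset.mem_range] at hx
    simp only [Function.comp_apply]
    omega
  rw [h1, ← Multiset.map_map, mrange_rev]

end MultisetLemmas

section AntiChar
variable {n : ℕ} {G : SimpleGraph (Fin n)} {α : ℝ}

lemma not_both_extreme (hn : 2 ≤ n) (G : SimpleGraph (Fin n)) :
    ¬((0 : ℕ) ∈ univ.image (deg G) ∧ (n - 1 : ℕ) ∈ univ.image (deg G)) := by
  classical
  rintro ⟨h0, hmax⟩
  obtain ⟨z, -, hz⟩ := Finset.mem_image.1 h0
  obtain ⟨w, -, hw⟩ := Finset.mem_image.1 hmax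
  have hzw : z ≠ w := by intro he; rw [he, hw] at hz; omega
  haveI : DecidableRel G.Adj := Classical.decRel _
  have hadj : G.Adj w z := adj_of_degV_max (V := Fin n) G
    (by rw [← deg_eq_degV, hw, Fintype.card_fin])
    (by rw [Fintype.card_fin]; omega) z hzw
  exact isolated_of_degV_zero G hz w (G.adj_symm hadj)

lemma image_anti (hn : 4 ≤ n) (hG : IsAntiregular G) :
    univ.image (deg G) = Finset.Icc 0 (n-2) ∨ univ.image (deg G) = Finset.Icc 1 (n-1) := by
  have hcard : (univ.image (deg G)).card = n - 1 := hG
  have hnb := not_both_extreme (by omega) G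
  by_cases h0 : (0 : ℕ) ∈ univ.image (deg G)
  · left
    have hsub : univ.image (deg G) ⊆ Finset.Icc 0 (n-2) := by
      intro x hx
      obtain ⟨u, -, hu⟩ := Finset.mem_image.1 hx
      rw [Finset.mem_Icc]
      have h1 := hu ▸ deg_le G u
      have h2 : x ≠ n - 1 := by
        intro he
        exact hnb ⟨h0, he ▸ hx⟩
      omega
    apply Finset.eq_of_subset_of_card_le hsub
    rw [Nat.card_Icc, hcard]
    omega
  · right
    have hsub : univ.image (deg G) ⊆ Finset.Icc 1 (n-1) := by
      intro x hx
      obtain ⟨u, -, hu⟩ := Finset.mem_image.1 hx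
      rw [Finset.mem_Icc]
      have h1 := hu ▸ deg_le G u
      have h2 : x ≠ 0 := fun he => h0 (he ▸ hx)
      omega
    apply Finset.eq_of_subset_of_card_le hsub
    rw [Nat.card_Icc, hcard]
    omega

lemma degM_toFinset (G : SimpleGraph (Fin n)) :
    (degM G).toFinset = univ.image (deg G) := by
  ext x
  rw [Multiset.mem_toFinset, degM_fin, Multiset.mem_map, Finset.mem_image]
  constructor
  · rintro ⟨v, -, hv⟩; exact ⟨v, mem_univ v, hv⟩
  · rintro ⟨v, -, hv⟩; exact ⟨v, Finset.mem_univ_val v, hv⟩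

lemma degM_shape (hn : 4 ≤ n) (hG : IsAntiregular G) :
    ∃ r ∈ univ.image (deg G), degM G = r ::ₘ (univ.image (deg G)).val := by
  classical
  have hle : (univ.image (deg G)).val ≤ degM G := by
    rw [← degM_toFinset, Multiset.toFinset_val]
    exact Multiset.dedup_le _
  obtain ⟨u, hu⟩ := Multiset.le_iff_exists_add.1 hle
  have hcardu : Multiset.card u = 1 := by
    have h1 : Multiset.card (degM G) = n := by rw [degM_card, Fintype.card_fin]
    have h2 : ((univ.image (deg G)).val.card : ℕ) = n - 1 := hG
    rw [hu] at h1
    rw [Multiset.card_add] at h1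
    omega
  obtain ⟨r, hr⟩ := Multiset.card_eq_one.1 hcardu
  refine ⟨r, ?_, ?_⟩
  · rw [← degM_toFinset, Multiset.mem_toFinset, hu, hr]
    exact Multiset.mem_add.2 (Or.inr (Multiset.mem_singleton_self r))
  · rw [hu, hr, add_comm, Multiset.singleton_add]

lemma degM_compl (G : SimpleGraph (Fin n)) :
    degM Gᶜ = Multiset.map (fun x => n - 1 - x) (degM G) := by
  classical
  haveI : DecidableRel G.Adj := Classical.decRel _
  rw [degM, degM, Multiset.map_map]
  apply Multiset.map_congr rfl
  intro v _
  have := degV_compl G v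
  rw [Fintype.card_fin] at this
  simpa using this

lemma degM_anti_cases (hn : 4 ≤ n) (hG : IsAntiregular G) :
    degM G = ((n-1)/2) ::ₘ Multiset.range (n-1)
      ∨ degM G = (n - 1 - (n-1)/2) ::ₘ Multiset.map Nat.succ (Multiset.range (n-1)) := by
  obtain ⟨m, rfl⟩ : ∃ m, n = m + 4 := ⟨n - 4, by omega⟩
  obtain ⟨r, hrI, hshape⟩ := degM_shape hn hG
  rcases image_anti hn hG with hI | hI
  · left
    rw [hI] at hshape
    rw [icc0_val] at hshape
    have hr : r = (m + 3) / 2 := by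
      apply repeat_deg (m+4) (Fin (m+4)) G r (Fintype.card_fin _)
      exact hshape
    rw [hshape, hr]
    simp only [show m+4-2+1 = m+3 from rfl, show m+4-1 = m+3 from rfl]
  · right
    rw [hI] at hshape hrI
    rw [icc1_val] at hshape
    have hcompl : degM Gᶜ = (m + 3 - r) ::ₘ Multiset.range (m+3) := by
      rw [degM_compl, hshape, Multiset.map_cons]
      congr 1
      exact map_reflect_range (m+3)
    have hr : m + 3 - r = (m + 3) / 2 :=
      repeat_deg (m+4) (Fin (m+4)) Gᶜ (m+3-r) (Fintype.card_fin _) hcompl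
    have hrle : r ≤ m + 3 := by
      rw [Finset.mem_Icc] at hrI
      exact hrI.2
    have hr2 : r = m + 3 - (m+3)/2 := by omega
    rw [hshape, hr2]
    simp only [show m+4-1 = m+3 from rfl]

lemma pairSumF_reflect (α : ℝ) (m : ℕ) (D : Multiset ℕ) (hD : ∀ x ∈ D, x ≤ m) :
    pairSumF α (Multiset.map (fun x => m - x) D) = pairSumF α D := by
  rw [pairSumF, pairSumF, Multiset.map_map]
  apply congrArg
  apply Multiset.map_congr rfl
  intro a ha
  simp only [Function.comp_apply]
  rw [Multiset.map_map]
  apply congrArg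
  apply Multiset.map_congr rfl
  intro b hb
  simp only [Function.comp_apply]
  congr 1
  have hca : ((m - a : ℕ) : ℝ) = (m : ℝ) - a := by
    push_cast [Nat.cast_sub (hD a ha)]; ring
  have hcb : ((m - b : ℕ) : ℝ) = (m : ℝ) - b := by
    push_cast [Nat.cast_sub (hD b hb)]; ring
  rw [hca, hcb, show (m : ℝ) - a - ((m:ℝ) - b) = (b : ℝ) - a by ring, abs_sub_comm]

lemma two_sigma_anti (hn : 4 ≤ n) (hα0 : 0 < α) (hG : IsAntiregular G) :
    2 * sigmaT G α = pairSumF α (((n-1)/2) ::ₘ Multiset.range (n-1)) := by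
  rw [two_mul_sigmaT hα0 G, ← pairSumF_degM]
  rcases degM_anti_cases hn hG with h | h
  · rw [h]
  · rw [h]
    have hrefl : (n - 1 - (n-1)/2) ::ₘ Multiset.map Nat.succ (Multiset.range (n-1))
        = Multiset.map (fun x => (n-1) - x) (((n-1)/2) ::ₘ Multiset.range (n-1)) := by
      rw [Multiset.map_cons, map_reflect_range']
    rw [hrefl, pairSumF_reflect α (n-1)]
    intro x hx
    rcases Multiset.mem_cons.1 hx with rfl | hx
    · omega
    · rw [Multiset.mem_range] at hx
      omega

end AntiChar

def AG (n : ℕ) : SimpleGraph (Fin n) where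
  Adj := fun i j => i ≠ j ∧ n ≤ i.val + j.val
  symm := ⟨by
    rintro i j ⟨h1, h2⟩
    exact ⟨h1.symm, by omega⟩⟩
  loopless := ⟨fun i h => h.1 rfl⟩

lemma card_filter_fin (n : ℕ) (P : ℕ → Prop) [DecidablePred P] :
    ((univ : Finset (Fin n)).filter (fun j => P j.val)).card
      = ((Finset.range n).filter P).card := by
  apply Finset.card_bij (fun j _ => j.val)
  · intro j hj
    rw [Finset.mem_filter] at hj ⊢
    exact ⟨Finset.mem_range.2 j.isLt, hj.2⟩
  · intro a _ b _ h
    exact Fin.val_injective h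
  · intro x hx
    rw [Finset.mem_filter, Finset.mem_range] at hx
    exact ⟨⟨x, hx.1⟩, Finset.mem_filter.2 ⟨mem_univ _, hx.2⟩, rfl⟩

lemma filter_ge_card (n c : ℕ) :
    ((Finset.range n).filter (fun j => c ≤ j)).card = n - c := by
  have h : (Finset.range n).filter (fun j => c ≤ j) = Finset.Ico c n := by
    ext j
    simp only [Finset.mem_filter, Finset.mem_range, Finset.mem_Ico]
    tauto
  rw [h, Nat.card_Ico]

lemma deg_AG (n : ℕ) (i : Fin n) :
    deg (AG n) i = if n ≤ 2 * i.val then i.val - 1 else i.val := by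
  classical
  haveI : DecidableRel (AG n).Adj := Classical.decRel _
  rw [deg_eq_degV, degV_eq]
  have hi : i.val < n := i.isLt
  have hfe : (univ.filter (fun j : Fin n => n - i.val ≤ j.val)).card = i.val := by
    rw [card_filter_fin n (fun j => n - i.val ≤ j), filter_ge_card]
    omega
  by_cases h2i : n ≤ 2 * i.val
  · rw [if_pos h2i]
    have heq : (univ.filter (fun j : Fin n => (AG n).Adj i j))
        = (univ.filter (fun j : Fin n => n - i.val ≤ j.val)).erase i := by
      ext j
      simp only [Finset.mem_filter, Finset.mem_erase, mem_univ, true_and]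
      constructor
      · rintro ⟨h1, h2⟩
        exact ⟨h1.symm, by omega⟩
      · rintro ⟨h1, h2⟩
        exact ⟨h1.symm, by omega⟩
    rw [heq, Finset.card_erase_of_mem, hfe]
    exact Finset.mem_filter.2 ⟨mem_univ i, by omega⟩
  · rw [if_neg h2i]
    have heq : (univ.filter (fun j : Fin n => (AG n).Adj i j))
        = univ.filter (fun j : Fin n => n - i.val ≤ j.val) := by
      ext j
      simp only [Finset.mem_filter, mem_univ, true_and]
      constructor
      · rintro ⟨h1, h2⟩
        omega
      · intro h1
        refine ⟨?_, by omega⟩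
        intro he
        rw [he] at h2i
        omega
    rw [heq, hfe]

lemma AG_antiregular (n : ℕ) (hn : 2 ≤ n) : IsAntiregular (AG n) := by
  classical
  rw [IsAntiregular]
  have himg : univ.image (deg (AG n)) = Finset.range (n-1) := by
    ext x
    rw [Finset.mem_image, Finset.mem_range]
    constructor
    · rintro ⟨i, -, hi⟩
      rw [deg_AG] at hi
      have := i.isLt
      by_cases h2i : n ≤ 2 * i.val
      · rw [if_pos h2i] at hi; omega
      · rw [if_neg h2i] at hi; omega
    · intro hx
      by_cases h2x : n ≤ 2 * x
      · refine ⟨⟨x + 1, by omega⟩, mem_univ _, ?_⟩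
        rw [deg_AG]
        simp only
        rw [if_pos (by omega)]
        omega
      · refine ⟨⟨x, by omega⟩, mem_univ _, ?_⟩
        rw [deg_AG]
        simp only
        rw [if_neg (by omega)]
  rw [himg, Finset.card_range]

/-- Let `n ≥ 4` and `0 < α ≤ log_{n−2}((n²−n−2)/(n²−n−4))`. A simple graph `G`
on `n` vertices maximizes `σ_t^α` among all simple graphs on `n` vertices if
and only if `G` is antiregular. -/
theorem stmt_4 (n : ℕ) (hn : 4 ≤ n) (α : ℝ) (hα0 : 0 < α)
    (hα1 : α ≤ Real.logb ((n : ℝ) - 2)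
        (((n : ℝ) ^ 2 - n - 2) / ((n : ℝ) ^ 2 - n - 4)))
    (G : SimpleGraph (Fin n)) :
    (∀ H : SimpleGraph (Fin n), sigmaT H α ≤ sigmaT G α) ↔ IsAntiregular G := by
  constructor
  · intro hmax
    by_contra hG
    have hA := AG_antiregular n (by omega)
    have h1 := sigmaT_ge_anti hn hα0 hA
    have h2 := hmax (AG n)
    have h3 := sigmaT_le_nonanti hn hα0 hG
    have h4 := key_ineq hn hα0 hα1
    have h5 := anti_gt hn hα0
    linarith
  · intro hG H
    by_cases hH : IsAntiregular H
    · have e1 := two_sigma_anti hn hα0 hG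
      have e2 := two_sigma_anti hn hα0 hH
      linarith
    · have h1 := sigmaT_le_nonanti hn hα0 hH
      have h4 := key_ineq hn hα0 hα1
      have h5 := anti_gt hn hα0
      have h6 := sigmaT_ge_anti hn hα0 hG
      linarith
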